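/- Define, for sequences, f(v, vᵢ, vⱼ)(n) := vᵢ(n)·vⱼ(n)·(vⱼ(n+1) − vᵢ(n+1))/(v(n+1)·(vⱼ(n) − vᵢ(n))) + (vᵢ(n+1)·vⱼ(n) − vᵢ(n)·vⱼ(n+1))/(vⱼ(n) − vᵢ(n)). Let v, v₁, v₂, v₃ : ℤ → ℝ be sequences such that all denominators occurring below are nowhere zero: v(n+1) ≠ 0, v₁ ≠ v₂, v₁ ≠ v₃, v₂ ≠ v₃ pointwise, and, with v_{ij} := f(v, vᵢ, vⱼ), also v₁(n+1) ≠ 0, v₂(n+1) ≠ 0, v₃(n+1) ≠ 0, v₁₂ ≠ v₁₃, v₁₂ ≠ v₂₃, v₁₃ ≠ v₂₃ pointwise. Then the three sequences f(v₁, f(v,v₁,v₂), f(v,v₁,v₃)), f(v₂, f(v,v₁,v₂), f(v,v₂,v₃)) and f(v₃, f(v,v₁,v₃), f(v,v₂,v₃)) coincide. (3D-consistency of the discrete tangential map.) -/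

import Mathlib

/-- The discrete tangential map in potential form, equation (dTTv) of the paper. -/
noncomputable def dTangMap (v vi vj : ℤ → ℝ) : ℤ → ℝ :=
  fun n => vi n * vj n * (vj (n + 1) - vi (n + 1)) / (v (n + 1) * (vj n - vi n))
    + (vi (n + 1) * vj n - vi n * vj (n + 1)) / (vj n - vi n)

/-- Pointwise version of the map: with `x = v(n+1)`, `a = vi n`, `a' = vi (n+1)`,
`b = vj n`, `b' = vj (n+1)` this is `dTangMap v vi vj n`. -/
noncomputable def dTangPt (x a ap b bp : ℝ) : ℝ :=
  a * b * (bp - ap) / (x * (b - a)) + (ap * b - a * bp) / (b - a)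

set_option maxHeartbeats 1000000 in
/-- Pointwise 3D-consistency, a pure algebraic identity over ℝ. -/
lemma dTangPt_consistency (x x2 b1 c1 d1 b2 c2 d2 b3 c3 d3 : ℝ)
    (hx : x ≠ 0) (hx2 : x2 ≠ 0) (hc1 : c1 ≠ 0) (hc2 : c2 ≠ 0) (hc3 : c3 ≠ 0)
    (hb12 : b1 ≠ b2) (hb13 : b1 ≠ b3) (hb23 : b2 ≠ b3)
    (hc12 : c1 ≠ c2) (hc13 : c1 ≠ c3) (hc23 : c2 ≠ c3)
    (hn1213 : dTangPt x b1 c1 b2 c2 ≠ dTangPt x b1 c1 b3 c3)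
    (hn1223 : dTangPt x b1 c1 b2 c2 ≠ dTangPt x b2 c2 b3 c3)
    (hn1323 : dTangPt x b1 c1 b3 c3 ≠ dTangPt x b2 c2 b3 c3) :
    dTangPt c1 (dTangPt x b1 c1 b2 c2) (dTangPt x2 c1 d1 c2 d2)
        (dTangPt x b1 c1 b3 c3) (dTangPt x2 c1 d1 c3 d3)
      = dTangPt c2 (dTangPt x b1 c1 b2 c2) (dTangPt x2 c1 d1 c2 d2)
        (dTangPt x b2 c2 b3 c3) (dTangPt x2 c2 d2 c3 d3) ∧
    dTangPt c2 (dTangPt x b1 c1 b2 c2) (dTangPt x2 c1 d1 c2 d2)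
        (dTangPt x b2 c2 b3 c3) (dTangPt x2 c2 d2 c3 d3)
      = dTangPt c3 (dTangPt x b1 c1 b3 c3) (dTangPt x2 c1 d1 c3 d3)
        (dTangPt x b2 c2 b3 c3) (dTangPt x2 c2 d2 c3 d3) := by
  have h21 : b2 - b1 ≠ 0 := sub_ne_zero.mpr hb12.symm
  have h31 : b3 - b1 ≠ 0 := sub_ne_zero.mpr hb13.symm
  have h32 : b3 - b2 ≠ 0 := sub_ne_zero.mpr hb23.symm
  have hc21 : c2 - c1 ≠ 0 := sub_ne_zero.mpr hc12.symm
  have hc31 : c3 - c1 ≠ 0 := sub_ne_zero.mpr hc13.symm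
  have hc32 : c3 - c2 ≠ 0 := sub_ne_zero.mpr hc23.symm
  set W12 := dTangPt x b1 c1 b2 c2 with hW12
  set W13 := dTangPt x b1 c1 b3 c3 with hW13
  set W23 := dTangPt x b2 c2 b3 c3 with hW23
  set W12p := dTangPt x2 c1 d1 c2 d2 with hW12p
  set W13p := dTangPt x2 c1 d1 c3 d3 with hW13p
  set W23p := dTangPt x2 c2 d2 c3 d3 with hW23p
  set N12 : ℝ := b1*b2*(c2-c1) + x*(c1*b2 - b1*c2) with hN12
  set N13 : ℝ := b1*b3*(c3-c1) + x*(c1*b3 - b1*c3) with hN13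
  set N23 : ℝ := b2*b3*(c3-c2) + x*(c2*b3 - b2*c3) with hN23
  set N12p : ℝ := c1*c2*(d2-d1) + x2*(d1*c2 - c1*d2) with hN12p
  set N13p : ℝ := c1*c3*(d3-d1) + x2*(d1*c3 - c1*d3) with hN13p
  set N23p : ℝ := c2*c3*(d3-d2) + x2*(d2*c3 - c2*d3) with hN23p
  set R : ℝ := b2*b3*c3 - b2*c2*b3 - b1*b3*c3 + b1*b2*c2 + b1*c1*b3 - b1*c1*b2
    + x*c2*b3 - x*b2*c3 - x*c1*b3 + x*c1*b2 + x*b1*c3 - x*b1*c2 with hR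
  clear_value W12 W13 W23 W12p W13p W23p N12 N13 N23 N12p N13p N23p R
  -- single-fraction forms of the six first-level values
  have e12 : W12 = N12 / (x*(b2-b1)) := by
    rw [hW12, hN12]; unfold dTangPt; field_simp
  have e13 : W13 = N13 / (x*(b3-b1)) := by
    rw [hW13, hN13]; unfold dTangPt; field_simp
  have e23 : W23 = N23 / (x*(b3-b2)) := by
    rw [hW23, hN23]; unfold dTangPt; field_simp
  have e12p : W12p = N12p / (x2*(c2-c1)) := by
    rw [hW12p, hN12p]; unfold dTangPt; field_simp
  have e13p : W13p = N13p / (x2*(c3-c1)) := by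
    rw [hW13p, hN13p]; unfold dTangPt; field_simp
  have e23p : W23p = N23p / (x2*(c3-c2)) := by
    rw [hW23p, hN23p]; unfold dTangPt; field_simp
  -- key factorizations
  have hM12 : c1 - W12 = b1*((c2-c1)*(x-b2)) / (x*(b2-b1)) := by
    rw [e12, hN12]; field_simp; ring
  have hM13 : c1 - W13 = b1*((c3-c1)*(x-b3)) / (x*(b3-b1)) := by
    rw [e13, hN13]; field_simp; ring
  have hM21 : c2 - W12 = b2*((c2-c1)*(x-b1)) / (x*(b2-b1)) := by
    rw [e12, hN12]; field_simp; ring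
  have hM23 : c2 - W23 = b2*((c3-c2)*(x-b3)) / (x*(b3-b2)) := by
    rw [e23, hN23]; field_simp; ring
  have hM31 : c3 - W13 = b3*((c3-c1)*(x-b1)) / (x*(b3-b1)) := by
    rw [e13, hN13]; field_simp; ring
  have hM32 : c3 - W23 = b3*((c3-c2)*(x-b2)) / (x*(b3-b2)) := by
    rw [e23, hN23]; field_simp; ring
  -- cross differences have numerators bᵢ * R
  have ed1 : W13 - W12 = b1*R / (x*((b2-b1)*(b3-b1))) := by
    rw [e12, e13, hN12, hN13, hR]; field_simp; ring
  have ed2 : W23 - W12 = b2*R / (x*((b2-b1)*(b3-b2))) := by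
    rw [e12, e23, hN12, hN23, hR]; field_simp; ring
  have ed3 : W23 - W13 = b3*R / (x*((b3-b1)*(b3-b2))) := by
    rw [e13, e23, hN13, hN23, hR]; field_simp; ring
  -- nonvanishing of b₁, b₂, b₃ and R
  have hne1 : W13 - W12 ≠ 0 := sub_ne_zero.mpr hn1213.symm
  have hne2 : W23 - W12 ≠ 0 := sub_ne_zero.mpr hn1223.symm
  have hne3 : W23 - W13 ≠ 0 := sub_ne_zero.mpr hn1323.symm
  have hbR1 : b1*R ≠ 0 := fun h => hne1 (by rw [ed1, h, zero_div])
  have hbR2 : b2*R ≠ 0 := fun h => hne2 (by rw [ed2, h, zero_div])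
  have hbR3 : b3*R ≠ 0 := fun h => hne3 (by rw [ed3, h, zero_div])
  have hb1 : b1 ≠ 0 := fun h => hbR1 (by rw [h, zero_mul])
  have hb2 : b2 ≠ 0 := fun h => hbR2 (by rw [h, zero_mul])
  have hb3 : b3 ≠ 0 := fun h => hbR3 (by rw [h, zero_mul])
  have hRne : R ≠ 0 := fun h => hbR1 (by rw [h, mul_zero])
  -- grouped form of the outer map
  have grp : ∀ c u up w wp : ℝ, c ≠ 0 → w - u ≠ 0 →
      dTangPt c u up w wp = (w*up*(c-u) - u*wp*(c-w)) / (c*(w-u)) := by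
    intro c u up w wp hc hwu
    unfold dTangPt
    field_simp
    ring
  -- closed forms of the three second-level values
  have hA : dTangPt c1 W12 W12p W13 W13p
      = (N13*N12p*(x-b2) - N12*N13p*(x-b3)) / (x*(x2*(c1*R))) := by
    rw [grp c1 W12 W12p W13 W13p hc1 hne1, hM12, hM13, ed1, e12, e13, e12p, e13p]
    field_simp
  have hB : dTangPt c2 W12 W12p W23 W23p
      = (N23*N12p*(x-b1) - N12*N23p*(x-b3)) / (x*(x2*(c2*R))) := by
    rw [grp c2 W12 W12p W23 W23p hc2 hne2, hM21, hM23, ed2, e12, e23, e12p, e23p]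
    field_simp
  have hC : dTangPt c3 W13 W13p W23 W23p
      = (N23*N13p*(x-b1) - N13*N23p*(x-b2)) / (x*(x2*(c3*R))) := by
    rw [grp c3 W13 W13p W23 W23p hc3 hne3, hM31, hM32, ed3, e13, e23, e13p, e23p]
    field_simp
  constructor
  · rw [hA, hB, div_eq_div_iff (mul_ne_zero hx (mul_ne_zero hx2 (mul_ne_zero hc1 hRne)))
      (mul_ne_zero hx (mul_ne_zero hx2 (mul_ne_zero hc2 hRne)))]
    rw [hN12, hN13, hN23, hN12p, hN13p, hN23p]
    ring
  · rw [hB, hC, div_eq_div_iff (mul_ne_zero hx (mul_ne_zero hx2 (mul_ne_zero hc2 hRne)))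
      (mul_ne_zero hx (mul_ne_zero hx2 (mul_ne_zero hc3 hRne)))]
    rw [hN12, hN13, hN23, hN12p, hN13p, hN23p]
    ring

/-- 3D-consistency of the discrete tangential map in potential form. -/
theorem dTangMap_3D_consistency
    (v v1 v2 v3 : ℤ → ℝ)
    (hv0 : ∀ n, v (n + 1) ≠ 0)
    (h12 : ∀ n, v1 n ≠ v2 n) (h13 : ∀ n, v1 n ≠ v3 n) (h23 : ∀ n, v2 n ≠ v3 n)
    (hv10 : ∀ n, v1 (n + 1) ≠ 0) (hv20 : ∀ n, v2 (n + 1) ≠ 0)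
    (hv30 : ∀ n, v3 (n + 1) ≠ 0)
    (h1213 : ∀ n, dTangMap v v1 v2 n ≠ dTangMap v v1 v3 n)
    (h1223 : ∀ n, dTangMap v v1 v2 n ≠ dTangMap v v2 v3 n)
    (h1323 : ∀ n, dTangMap v v1 v3 n ≠ dTangMap v v2 v3 n) :
    dTangMap v1 (dTangMap v v1 v2) (dTangMap v v1 v3)
      = dTangMap v2 (dTangMap v v1 v2) (dTangMap v v2 v3) ∧
    dTangMap v2 (dTangMap v v1 v2) (dTangMap v v2 v3)
      = dTangMap v3 (dTangMap v v1 v3) (dTangMap v v2 v3) := by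
  have key := fun n : ℤ =>
    dTangPt_consistency (v (n+1)) (v (n+1+1)) (v1 n) (v1 (n+1)) (v1 (n+1+1))
      (v2 n) (v2 (n+1)) (v2 (n+1+1)) (v3 n) (v3 (n+1)) (v3 (n+1+1))
      (hv0 n) (hv0 (n+1)) (hv10 n) (hv20 n) (hv30 n)
      (h12 n) (h13 n) (h23 n) (h12 (n+1)) (h13 (n+1)) (h23 (n+1))
      (h1213 n) (h1223 n) (h1323 n)
  exact ⟨funext fun n => (key n).1, funext fun n => (key n).2⟩
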